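/- arXiv:2002.08783 — 2 statements merged into one kernel-verified Lean document; each statement's English description precedes it below -/
import Mathlib

section
/- If f is a posynomial in n positive real variables, i.e., a finite sum of monomials f(v) = Σₖ cₖ·v₁^{a₁ₖ}···vₙ^{aₙₖ} with all cₖ > 0, then the function x ↦ log f(exp(x)) is convex on ℝⁿ. -/
open Real Finset

/-- Hölder-type inequality: `∑ u^p v^q ≤ (∑ u)^p (∑ v)^q` for `p + q = 1`. -/
lemma holder_key {m : ℕ} (u v : Fin m → ℝ) (hu : ∀ k, 0 ≤ u k) (hv : ∀ k, 0 ≤ v k)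
    {p q : ℝ} (hp : 0 < p) (hq : 0 < q) (hpq : p + q = 1) :
    ∑ k, (u k) ^ p * (v k) ^ q ≤ (∑ k, u k) ^ p * (∑ k, v k) ^ q := by
  have hpq' : Real.HolderConjugate p⁻¹ q⁻¹ := by
    exact Real.HolderConjugate.inv_inv hp hq hpq
  have h := Real.inner_le_Lp_mul_Lq_of_nonneg Finset.univ hpq'
    (f := fun k => (u k) ^ p) (g := fun k => (v k) ^ q)
    (fun k _ => rpow_nonneg (hu k) p) (fun k _ => rpow_nonneg (hv k) q)
  have e1 : ∀ k : Fin m, ((u k) ^ p) ^ p⁻¹ = u k := fun k =>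
    Real.rpow_rpow_inv (hu k) hp.ne'
  have e2 : ∀ k : Fin m, ((v k) ^ q) ^ q⁻¹ = v k := fun k =>
    Real.rpow_rpow_inv (hv k) hq.ne'
  simp only [e1, e2, one_div, inv_inv] at h
  exact h

/-- If `f` is a posynomial in `n` positive real variables, i.e. a finite sum of
monomials `f v = ∑ k, c k * ∏ i, v i ^ a k i` with all `c k > 0`, then the
function `x ↦ log (f (exp x))` is convex on `ℝⁿ`. -/
theorem posynomial_log_exp_convex (n m : ℕ) (f : (Fin n → ℝ) → ℝ)
    (c : Fin m → ℝ) (a : Fin m → Fin n → ℝ) (hc : ∀ k, 0 < c k)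
    (hf : ∀ v : Fin n → ℝ, (∀ i, 0 < v i) →
      f v = ∑ k, c k * ∏ i, v i ^ a k i) :
    ConvexOn ℝ Set.univ (fun x : Fin n → ℝ =>
      Real.log (f (fun i => Real.exp (x i)))) := by
  -- rewrite f (exp x) as a sum of exponentials
  have hS : ∀ x : Fin n → ℝ,
      f (fun i => Real.exp (x i)) = ∑ k, Real.exp (Real.log (c k) + ∑ i, a k i * x i) := by
    intro x
    rw [hf _ (fun i => Real.exp_pos _)]
    refine Finset.sum_congr rfl fun k _ => ?_
    rw [Real.exp_add, Real.exp_log (hc k), Real.exp_sum]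
    congr 1
    refine Finset.prod_congr rfl fun i _ => ?_
    rw [Real.rpow_def_of_pos (Real.exp_pos _), Real.log_exp, mul_comm]
  rcases Nat.eq_zero_or_pos m with hm | hm
  · subst hm
    have : ∀ x : Fin n → ℝ, Real.log (f (fun i => Real.exp (x i))) = 0 := by
      intro x; rw [hS]; simp
    refine ⟨convex_univ, fun x _ y _ p q hp hq hpq => ?_⟩
    simp only [this]
    simp [hpq]
  haveI : Nonempty (Fin m) := ⟨⟨0, hm⟩⟩
  have hSpos : ∀ x : Fin n → ℝ, 0 < f (fun i => Real.exp (x i)) := by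
    intro x
    rw [hS]
    exact Finset.sum_pos (fun k _ => Real.exp_pos _) Finset.univ_nonempty
  refine ⟨convex_univ, fun x _ y _ p q hp hq hpq => ?_⟩
  rcases eq_or_lt_of_le hp with hp0 | hp0
  · have hq1 : q = 1 := by linarith
    subst hq1
    simp [← hp0]
  rcases eq_or_lt_of_le hq with hq0 | hq0
  · have hp1 : p = 1 := by linarith
    subst hp1
    simp [← hq0]
  -- main case : 0 < p, 0 < q
  set u : Fin m → ℝ := fun k => Real.exp (Real.log (c k) + ∑ i, a k i * x i) with hu
  set v : Fin m → ℝ := fun k => Real.exp (Real.log (c k) + ∑ i, a k i * y i) with hv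
  have key : f (fun i => Real.exp ((p • x + q • y) i)) ≤ (∑ k, u k) ^ p * (∑ k, v k) ^ q := by
    rw [hS]
    have : ∀ k : Fin m, Real.exp (Real.log (c k) + ∑ i, a k i * (p • x + q • y) i)
        = (u k) ^ p * (v k) ^ q := by
      intro k
      rw [hu, hv]
      simp only
      rw [Real.rpow_def_of_pos (Real.exp_pos _), Real.rpow_def_of_pos (Real.exp_pos _),
        Real.log_exp, Real.log_exp, ← Real.exp_add]
      congr 1
      have : ∀ i, a k i * (p • x + q • y) i = p * (a k i * x i) + q * (a k i * y i) := by
        intro i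
        simp [Pi.add_apply, Pi.smul_apply, smul_eq_mul]
        ring
      rw [Finset.sum_congr rfl fun i _ => this i, Finset.sum_add_distrib,
        ← Finset.mul_sum, ← Finset.mul_sum]
      linear_combination -Real.log (c k) * hpq
    rw [Finset.sum_congr rfl fun k _ => this k]
    exact holder_key u v (fun k => (Real.exp_pos _).le) (fun k => (Real.exp_pos _).le)
      hp0 hq0 hpq
  have hupos : 0 < ∑ k, u k := Finset.sum_pos (fun k _ => Real.exp_pos _) Finset.univ_nonempty
  have hvpos : 0 < ∑ k, v k := Finset.sum_pos (fun k _ => Real.exp_pos _) Finset.univ_nonempty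
  calc Real.log (f (fun i => Real.exp ((p • x + q • y) i)))
      ≤ Real.log ((∑ k, u k) ^ p * (∑ k, v k) ^ q) :=
        Real.log_le_log (hSpos _) key
    _ = p * Real.log (∑ k, u k) + q * Real.log (∑ k, v k) := by
        rw [Real.log_mul (Real.rpow_pos_of_pos hupos p).ne' (Real.rpow_pos_of_pos hvpos q).ne',
          Real.log_rpow hupos, Real.log_rpow hvpos]
    _ = p • Real.log (f (fun i => Real.exp (x i))) + q • Real.log (f (fun i => Real.exp (y i))) := by
        rw [hS x, hS y]; simp [smul_eq_mul, hu, hv]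
end

section
/- For the one-round problem with n independent modules (diagonal WTM), total remaining work Σᵢ φᵢ Pᵢ(0), cost functions fᵢ(φᵢ) = cᵢ(1/φᵢ − 1/φ̄ᵢ), and budget B̄ large enough that the box constraints are inactive, the optimal completion rates satisfy φᵢ* proportional to (cᵢ / Pᵢ(0))^{1/2}; i.e., at optimum, modules with more initial remaining work relative to cost receive smaller (better) completion rates. -/
private lemma aux_deriv (a r p : ℝ) (ha : a ≠ 0) :
    HasDerivAt (fun ε : ℝ => (a + ε * r)⁻¹ * p) (-r / a ^ 2 * p) 0 := by
  have h1 : HasDerivAt (fun ε : ℝ => a + ε * r) r 0 := by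
    simpa using ((hasDerivAt_id (0:ℝ)).mul_const r).const_add a
  have h2 : (fun ε : ℝ => a + ε * r) 0 ≠ 0 := by simpa
  simpa using (h1.inv h2).mul_const p

/-- One-round problem with `n` independent modules (diagonal WTM): if `φ*`
minimizes the total remaining work `∑ i, φ i * P0 i` over the feasible set
determined by the budget constraint `∑ i, c i * (1/φ i - 1/φ̄ i) ≤ B̄` and
the box constraints `0 < φ i ≤ φ̄ i`, and the box constraints are inactive at
`φ*` (budget large enough), then the optimal completion rates satisfy
`φ* i ∝ √(c i / P0 i)`. -/
theorem one_round_diagonal_optimal_rates (n : ℕ)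
    (P0 c φbar : Fin n → ℝ)
    (hP0 : ∀ i, 0 < P0 i) (hc : ∀ i, 0 < c i) (hφbar : ∀ i, 0 < φbar i)
    (Bbar : ℝ)
    (S : Set (Fin n → ℝ))
    (hS : S = {φ | (∀ i, 0 < φ i ∧ φ i ≤ φbar i) ∧
      ∑ i, c i * (1 / φ i - 1 / φbar i) ≤ Bbar})
    (φstar : Fin n → ℝ) (hmem : φstar ∈ S)
    (hopt : ∀ φ ∈ S, ∑ i, φstar i * P0 i ≤ ∑ i, φ i * P0 i)
    (hinterior : ∀ i, φstar i < φbar i) :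
    ∃ t : ℝ, 0 < t ∧ ∀ i, φstar i = t * Real.sqrt (c i / P0 i) := by
  subst hS
  obtain ⟨hbox, hbud⟩ := hmem
  have hφpos : ∀ k, 0 < φstar k := fun k => (hbox k).1
  rcases Nat.eq_zero_or_pos n with hn | hn
  · subst hn; exact ⟨1, one_pos, fun i => i.elim0⟩
  -- key exchange lemma
  have key : ∀ i j : Fin n, i ≠ j →
      P0 i * φstar i ^ 2 * c j = P0 j * φstar j ^ 2 * c i := by
    intro i j hij
    have hci : 0 < c i := hc i
    have hcj : 0 < c j := hc j
    set a : ℝ := (φstar i)⁻¹ with ha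
    set b : ℝ := (φstar j)⁻¹ with hb
    have hai : 0 < a := inv_pos.2 (hφpos i)
    have hbj : 0 < b := inv_pos.2 (hφpos j)
    have hgapi : (φbar i)⁻¹ < a := by
      rw [ha]; exact inv_strictAnti₀ (hφpos i) (hinterior i)
    have hgapj : (φbar j)⁻¹ < b := by
      rw [hb]; exact inv_strictAnti₀ (hφpos j) (hinterior j)
    set δ : ℝ := min (c i * (a - (φbar i)⁻¹)) (c j * (b - (φbar j)⁻¹)) with hδdef
    have hδ : 0 < δ := lt_min (mul_pos hci (by linarith)) (mul_pos hcj (by linarith))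
    set F : ℝ → Fin n → ℝ := fun ε k =>
      if k = i then (a + ε * (c i)⁻¹)⁻¹
      else if k = j then (b + ε * (-(c j)⁻¹))⁻¹
      else φstar k with hF
    -- bounds for small ε
    have hAi : ∀ ε : ℝ, |ε| < δ → (φbar i)⁻¹ ≤ a + ε * (c i)⁻¹ := by
      intro ε hε
      have h1 : -(c i * (a - (φbar i)⁻¹)) < ε := by
        have := neg_lt_of_abs_lt hε
        have h2 : δ ≤ c i * (a - (φbar i)⁻¹) := min_le_left _ _
        linarith
      nlinarith [mul_pos (show (0:ℝ) < ε + c i * (a - (φbar i)⁻¹) by linarith)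
        (inv_pos.2 hci), mul_inv_cancel₀ hci.ne']
    have hBj : ∀ ε : ℝ, |ε| < δ → (φbar j)⁻¹ ≤ b + ε * (-(c j)⁻¹) := by
      intro ε hε
      have h1 : ε < c j * (b - (φbar j)⁻¹) := by
        have := lt_of_abs_lt hε
        have h2 : δ ≤ c j * (b - (φbar j)⁻¹) := min_le_right _ _
        linarith
      nlinarith [mul_pos (show (0:ℝ) < c j * (b - (φbar j)⁻¹) - ε by linarith)
        (inv_pos.2 hcj), mul_inv_cancel₀ hcj.ne']
    -- feasibility
    have feas : ∀ ε : ℝ, |ε| < δ →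
        F ε ∈ {φ : Fin n → ℝ | (∀ i, 0 < φ i ∧ φ i ≤ φbar i) ∧
          ∑ i, c i * (1 / φ i - 1 / φbar i) ≤ Bbar} := by
      intro ε hε
      have hAi' := hAi ε hε
      have hBj' := hBj ε hε
      have hApos : 0 < a + ε * (c i)⁻¹ := lt_of_lt_of_le (inv_pos.2 (hφbar i)) hAi'
      have hBpos : 0 < b + ε * (-(c j)⁻¹) := lt_of_lt_of_le (inv_pos.2 (hφbar j)) hBj'
      constructor
      · intro k
        by_cases hk : k = i
        · subst hk
          simp only [hF, if_pos rfl]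
          refine ⟨inv_pos.2 hApos, ?_⟩
          calc (a + ε * (c k)⁻¹)⁻¹ ≤ ((φbar k)⁻¹)⁻¹ :=
                inv_anti₀ (inv_pos.2 (hφbar k)) hAi'
            _ = φbar k := inv_inv _
        · by_cases hk' : k = j
          · subst hk'
            simp only [hF, if_neg hk, if_pos rfl]
            refine ⟨inv_pos.2 hBpos, ?_⟩
            calc (b + ε * (-(c k)⁻¹))⁻¹ ≤ ((φbar k)⁻¹)⁻¹ :=
                  inv_anti₀ (inv_pos.2 (hφbar k)) hBj'
              _ = φbar k := inv_inv _
          · simp only [hF, if_neg hk, if_neg hk']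
            exact ⟨hφpos k, (hinterior k).le⟩
      · have hsum : ∑ k, c k * (1 / F ε k - 1 / φbar k)
            = ∑ k, (c k * (1 / φstar k - 1 / φbar k)
              + (if k = i then ε else if k = j then -ε else 0)) := by
          refine Finset.sum_congr rfl fun k _ => ?_
          by_cases hk : k = i
          · subst hk
            simp only [hF, if_pos rfl, if_true, one_div, inv_inv]
            field_simp
            ring_nf
            linear_combination (c k) * ha
          · by_cases hk' : k = j
            · subst hk'
              simp only [hF, if_neg hk, if_pos rfl, if_true, one_div, inv_inv]
              field_simp
              ring_nf
              linear_combination (c k) * hb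
            · simp [hF, hk, hk']
        rw [hsum, Finset.sum_add_distrib]
        have hzero : ∑ k, (if k = i then ε else if k = j then -ε else (0:ℝ)) = 0 := by
          rw [← Finset.sum_subset (Finset.subset_univ {i, j})
            (fun x _ hx => by
              simp only [Finset.mem_insert, Finset.mem_singleton, not_or] at hx
              simp [hx.1, hx.2])]
          rw [Finset.sum_pair hij]
          simp [hij, hij.symm]
        rw [hzero]
        simpa using hbud
    -- the objective along the perturbation
    set g : ℝ → ℝ := fun ε => ∑ k, F ε k * P0 k with hg
    have hg0 : g 0 = ∑ k, φstar k * P0 k := by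
      refine Finset.sum_congr rfl fun k _ => ?_
      by_cases hk : k = i
      · subst hk; simp [hF, ha]
      · by_cases hk' : k = j
        · subst hk'; simp [hF, hk, hb]
        · simp [hF, hk, hk']
    have hmin : IsLocalMin g 0 := by
      filter_upwards [Metric.ball_mem_nhds (0:ℝ) hδ] with ε hε
      have hfeas := feas ε (by simpa [Real.dist_eq] using hε)
      rw [hg0]
      exact hopt _ hfeas
    -- derivative of g at 0
    set d : Fin n → ℝ := fun k =>
      if k = i then -(c i)⁻¹ / a ^ 2 * P0 i
      else if k = j then (c j)⁻¹ / b ^ 2 * P0 j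
      else 0 with hd
    have hderiv : HasDerivAt g (∑ k, d k) 0 := by
      refine HasDerivAt.fun_sum fun k _ => ?_
      by_cases hk : k = i
      · subst hk
        simp only [hF, hd, if_pos rfl]
        simpa [neg_div] using aux_deriv a (c k)⁻¹ (P0 k) hai.ne'
      · by_cases hk' : k = j
        · subst hk'
          simp only [hF, hd, if_neg hk, if_pos rfl]
          simpa [neg_div] using aux_deriv b (-(c k)⁻¹) (P0 k) hbj.ne'
        · simp only [hF, hd, if_neg hk, if_neg hk']
          exact hasDerivAt_const 0 (φstar k * P0 k)
    have hzero : ∑ k, d k = 0 := hmin.hasDerivAt_eq_zero hderiv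
    have hdij : d i + d j = 0 := by
      rw [← hzero, ← Finset.sum_subset (Finset.subset_univ {i, j})
        (fun x _ hx => by
          simp only [Finset.mem_insert, Finset.mem_singleton, not_or] at hx
          simp [hd, hx.1, hx.2])]
      rw [Finset.sum_pair hij]
    have hdi : d i = -(c i)⁻¹ / a ^ 2 * P0 i := by simp [hd]
    have hdj : d j = (c j)⁻¹ / b ^ 2 * P0 j := by simp [hd, hij.symm]
    rw [hdi, hdj] at hdij
    have hφi : φstar i ≠ 0 := (hφpos i).ne'
    have hφj : φstar j ≠ 0 := (hφpos j).ne'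
    rw [ha, hb] at hdij
    field_simp at hdij
    nlinarith [hdij, sq_nonneg (φstar i), sq_nonneg (φstar j)]
  -- conclude proportionality
  set i0 : Fin n := ⟨0, hn⟩
  set K : ℝ := P0 i0 * φstar i0 ^ 2 / c i0 with hK
  have hKpos : 0 < K := div_pos (mul_pos (hP0 i0) (pow_pos (hφpos i0) 2)) (hc i0)
  refine ⟨Real.sqrt K, Real.sqrt_pos.2 hKpos, fun i => ?_⟩
  have hsq : φstar i ^ 2 = K * (c i / P0 i) := by
    by_cases hi : i = i0
    · subst hi
      rw [hK]
      field_simp [(hP0 i0).ne', (hc i0).ne']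
    · have hk := key i i0 hi
      rw [hK]
      field_simp [(hP0 i).ne', (hc i).ne', (hP0 i0).ne', (hc i0).ne']
      linear_combination hk
  have : φstar i = Real.sqrt (φstar i ^ 2) := (Real.sqrt_sq (hφpos i).le).symm
  rw [this, hsq, Real.sqrt_mul hKpos.le]
end
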